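/- Let Φ : ℝ → ℝ be bounded and continuous with M := sup_{x∈ℝ}|Φ(x)| > 0. For V > 0 set λ(V) := 2M + V and f_λ^v(z) := (1+z²)^{3/2}·( v/√(1+z²) − Φ(v/√(1+z²)) + λ ). Then both integrals ∫₀^∞ dz/f_{λ(V)}^{V}(z) and ∫₀^∞ dz/f_{λ(V)}^{−V}(z) are finite, and the change of variables z ↦ V/√(1+z²) yields the identity ∫₀^∞ ( 1/f_{λ(V)}^{−V}(z) − 1/f_{λ(V)}^{V}(z) ) dz = (1/V)·∫₀^V [ z·(2z + Φ(−z) − Φ(z)) ] / [ √(V²−z²)·(z − Φ(z) + λ(V))·(−z − Φ(−z) + λ(V)) ] dz. -/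

import Mathlib

open Set Filter MeasureTheory

/-- The traveling wave slope nonlinearity
`f_λ^v(z) = (1+z²)^{3/2}·(v/√(1+z²) − Φ(v/√(1+z²)) + λ)`. -/
noncomputable def fTW (Φ : ℝ → ℝ) (lam v z : ℝ) : ℝ :=
  (1 + z^2) ^ (3/2 : ℝ) *
    (v / Real.sqrt (1 + z^2) - Φ (v / Real.sqrt (1 + z^2)) + lam)

lemma aux_sqrt_pos (z : ℝ) : 0 < Real.sqrt (1 + z^2) :=
  Real.sqrt_pos.2 (by positivity)

lemma aux_sqrt_one_le (z : ℝ) : 1 ≤ Real.sqrt (1 + z^2) := by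
  have h := Real.sq_sqrt (show (0:ℝ) ≤ 1 + z^2 by positivity)
  nlinarith [Real.sqrt_nonneg (1 + z^2), sq_nonneg z]

lemma aux_rpow_eq (z : ℝ) : (1 + z^2) ^ (3/2 : ℝ) = Real.sqrt (1 + z^2) ^ 3 := by
  have h0 : (0:ℝ) ≤ 1 + z^2 := by positivity
  rw [Real.sqrt_eq_rpow, ← Real.rpow_natCast ((1+z^2) ^ (1/2:ℝ)) 3, ← Real.rpow_mul h0]
  norm_num

/-- second factor lower bound -/
lemma aux_factor_lb (Φ : ℝ → ℝ) (M V : ℝ) (hΦM : ∀ x, |Φ x| ≤ M)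
    (v z : ℝ) (hv : |v| ≤ V) :
    M ≤ v / Real.sqrt (1 + z^2) - Φ (v / Real.sqrt (1 + z^2)) + (2*M + V) := by
  set s := Real.sqrt (1 + z^2) with hs
  have hs1 : 1 ≤ s := aux_sqrt_one_le z
  have h1 : |v / s| ≤ V := by
    rw [abs_div, abs_of_nonneg (show (0:ℝ) ≤ s by linarith)]
    calc |v| / s ≤ |v| / 1 := by
          apply div_le_div_of_nonneg_left (abs_nonneg v) one_pos hs1
      _ = |v| := by simp
      _ ≤ V := hv
  have h2 := hΦM (v / s)
  have h3 := abs_le.1 h1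
  have h4 := abs_le.1 h2
  linarith [h3.1, h4.2]

lemma aux_fTW_lb (Φ : ℝ → ℝ) (M V : ℝ) (hΦM : ∀ x, |Φ x| ≤ M) (hMpos : 0 < M)
    (v z : ℝ) (hv : |v| ≤ V) :
    M * (1 + z^2) ≤ fTW Φ (2*M + V) v z := by
  have h1 : (1:ℝ) + z^2 ≤ (1 + z^2) ^ (3/2 : ℝ) := by
    calc (1:ℝ) + z^2 = (1 + z^2) ^ (1:ℝ) := by rw [Real.rpow_one]
      _ ≤ (1 + z^2) ^ (3/2 : ℝ) :=
        Real.rpow_le_rpow_of_exponent_le (by nlinarith [sq_nonneg z]) (by norm_num)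
  have h2 := aux_factor_lb Φ M V hΦM v z hv
  have h3 : (0:ℝ) < 1 + z^2 := by positivity
  unfold fTW
  calc M * (1 + z^2) = (1 + z^2) * M := by ring
    _ ≤ (1 + z^2) ^ (3/2 : ℝ) * (v / Real.sqrt (1+z^2) - Φ (v / Real.sqrt (1+z^2)) + (2*M+V)) :=
        mul_le_mul h1 h2 hMpos.le (by positivity)

lemma aux_fTW_pos (Φ : ℝ → ℝ) (M V : ℝ) (hΦM : ∀ x, |Φ x| ≤ M) (hMpos : 0 < M)
    (v z : ℝ) (hv : |v| ≤ V) : 0 < fTW Φ (2*M + V) v z :=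
  lt_of_lt_of_le (by nlinarith [sq_nonneg z]) (aux_fTW_lb Φ M V hΦM hMpos v z hv)

lemma aux_integrable (Φ : ℝ → ℝ) (M V : ℝ) (hΦc : Continuous Φ) (hΦM : ∀ x, |Φ x| ≤ M)
    (hMpos : 0 < M) (v : ℝ) (hv : |v| ≤ V) :
    IntegrableOn (fun z => 1 / fTW Φ (2*M + V) v z) (Ioi (0:ℝ)) := by
  have hpos : ∀ z, 0 < fTW Φ (2*M + V) v z := fun z => aux_fTW_pos Φ M V hΦM hMpos v z hv
  have hcont : Continuous fun z => 1 / fTW Φ (2*M + V) v z := by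
    apply Continuous.div continuous_const
    · unfold fTW
      apply Continuous.mul
      · apply Continuous.rpow_const (by continuity)
        intro x; left; positivity
      · have hs : Continuous fun z : ℝ => v / Real.sqrt (1 + z^2) := by
          apply Continuous.div continuous_const (by continuity)
          intro x; exact (aux_sqrt_pos x).ne'
        exact ((hs.sub (hΦc.comp hs)).add continuous_const)
    · intro z; exact (hpos z).ne'
  apply Integrable.mono' ((integrable_inv_one_add_sq.const_mul M⁻¹).integrableOn)
    hcont.aestronglyMeasurable
  filter_upwards with z
  have h1 : M * (1 + z^2) ≤ fTW Φ (2*M + V) v z := aux_fTW_lb Φ M V hΦM hMpos v z hv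
  have h2 : (0:ℝ) < M * (1 + z^2) := by positivity
  rw [Real.norm_eq_abs, abs_of_pos (one_div_pos.2 (hpos z)), one_div, ← mul_inv]
  exact inv_anti₀ h2 h1

lemma aux_alg (V z s a b : ℝ) (hV : V ≠ 0) (hz : z ≠ 0) (hs : s ≠ 0)
    (ha : a ≠ 0) (hb : b ≠ 0) :
    V * z / s ^ 3 * (V / s * (a - b) / (V * z / s * a * b)) =
      V * (1 / (s ^ 3 * b) - 1 / (s ^ 3 * a)) := by
  field_simp

/-- for bounded continuous `Φ` with `M = sup|Φ| > 0`, `λ(V) = 2M + V` and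
`V > 0`, the integrals `∫₀^∞ dz/f_{λ(V)}^{±V}(z)` are finite, and the change of
variables `z ↦ V/√(1+z²)` gives
`∫₀^∞ (1/f_{λ(V)}^{−V} − 1/f_{λ(V)}^{V}) dz
  = (1/V)·∫₀^V z(2z+Φ(−z)−Φ(z)) / (√(V²−z²)(z−Φ(z)+λ(V))(−z−Φ(−z)+λ(V))) dz`. -/
theorem stmt_10 (Φ : ℝ → ℝ) (M V : ℝ) (hΦc : Continuous Φ)
    (hbdd : BddAbove (Set.range fun x => |Φ x|))
    (hM : M = ⨆ x, |Φ x|) (hMpos : 0 < M) (hV : 0 < V) :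
    IntegrableOn (fun z => 1 / fTW Φ (2*M + V) V z) (Ioi (0:ℝ)) ∧
    IntegrableOn (fun z => 1 / fTW Φ (2*M + V) (-V) z) (Ioi (0:ℝ)) ∧
    (∫ z in Ioi (0:ℝ), (1 / fTW Φ (2*M + V) (-V) z - 1 / fTW Φ (2*M + V) V z)) =
      (1/V) * ∫ z in (0:ℝ)..V, z * (2*z + Φ (-z) - Φ z) /
        (Real.sqrt (V^2 - z^2) * (z - Φ z + (2*M + V)) * (-z - Φ (-z) + (2*M + V))) := by
  have hΦM : ∀ x, |Φ x| ≤ M := fun x => hM ▸ le_ciSup hbdd x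
  have hVabs : |V| ≤ V := by rw [abs_of_pos hV]
  have hVnabs : |(-V)| ≤ V := by rw [abs_neg, abs_of_pos hV]
  refine ⟨aux_integrable Φ M V hΦc hΦM hMpos V hVabs,
          aux_integrable Φ M V hΦc hΦM hMpos (-V) hVnabs, ?_⟩
  set g : ℝ → ℝ := fun z => z * (2*z + Φ (-z) - Φ z) /
      (Real.sqrt (V^2 - z^2) * (z - Φ z + (2*M + V)) * (-z - Φ (-z) + (2*M + V))) with hg
  set f : ℝ → ℝ := fun z => V / Real.sqrt (1 + z^2) with hf
  set f' : ℝ → ℝ := fun z => -(V * z) / Real.sqrt (1 + z^2) ^ 3 with hf'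
  -- derivative
  have hderiv : ∀ z ∈ Ioi (0:ℝ), HasDerivWithinAt f (f' z) (Ioi 0) z := by
    intro z _
    have hs0 : (0:ℝ) < Real.sqrt (1 + z^2) := aux_sqrt_pos z
    have h1 : HasDerivAt (fun z : ℝ => 1 + z^2) (2*z) z := by
      simpa using ((hasDerivAt_pow 2 z).const_add 1)
    have h2 : HasDerivAt (fun z : ℝ => Real.sqrt (1 + z^2))
        (2*z / (2 * Real.sqrt (1 + z^2))) z := h1.sqrt (by positivity)
    have h3 := (hasDerivAt_const z V).div h2 hs0.ne'
    have heq : (0 * Real.sqrt (1 + z^2) - V * (2*z / (2 * Real.sqrt (1 + z^2)))) /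
        Real.sqrt (1 + z^2) ^ 2 = f' z := by
      have hsq : Real.sqrt (1 + z^2) ^ 2 = 1 + z^2 := Real.sq_sqrt (by positivity)
      field_simp [hf']
      have hs3 : Real.sqrt (1 + z^2) ^ 3 * (Real.sqrt (1 + z^2))⁻¹ ^ 3 = 1 := by
        field_simp
      linear_combination (z*V) * hs3
    rw [heq] at h3
    exact h3.hasDerivWithinAt
  -- image
  have himage : f '' Ioi (0:ℝ) = Ioo 0 V := by
    ext u
    constructor
    · rintro ⟨z, hz, rfl⟩
      have hz0 : (0:ℝ) < z := hz
      have hs1 : 1 < Real.sqrt (1 + z^2) := by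
        have h := Real.sq_sqrt (show (0:ℝ) ≤ 1 + z^2 by positivity)
        nlinarith [Real.sqrt_nonneg (1 + z^2)]
      exact ⟨by positivity, div_lt_self hV hs1⟩
    · rintro ⟨hu0, huV⟩
      have h1 : 1 < V / u := (one_lt_div hu0).2 huV
      have h2 : (0:ℝ) < (V/u)^2 - 1 := by nlinarith
      refine ⟨Real.sqrt ((V/u)^2 - 1), Real.sqrt_pos.2 h2, ?_⟩
      have h3 : 1 + Real.sqrt ((V/u)^2 - 1) ^ 2 = (V/u)^2 := by
        rw [Real.sq_sqrt h2.le]; ring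
      show V / Real.sqrt (1 + Real.sqrt ((V/u)^2 - 1) ^ 2) = u
      rw [h3, Real.sqrt_sq (by positivity)]
      field_simp
  -- injectivity
  have hinj : InjOn f (Ioi (0:ℝ)) := by
    intro z₁ h₁ z₂ h₂ h
    have hs₁ : (0:ℝ) < Real.sqrt (1 + z₁^2) := aux_sqrt_pos z₁
    have hs₂ : (0:ℝ) < Real.sqrt (1 + z₂^2) := aux_sqrt_pos z₂
    have h' : V * Real.sqrt (1 + z₂^2) = V * Real.sqrt (1 + z₁^2) :=
      (div_eq_div_iff hs₁.ne' hs₂.ne').1 h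
    have hseq : Real.sqrt (1 + z₂^2) = Real.sqrt (1 + z₁^2) :=
      mul_left_cancel₀ hV.ne' h'
    have h4 : z₁^2 = z₂^2 := by
      have h5 := congrArg (fun x => x^2) hseq
      simp only [Real.sq_sqrt (show (0:ℝ) ≤ 1 + z₂^2 by positivity),
        Real.sq_sqrt (show (0:ℝ) ≤ 1 + z₁^2 by positivity)] at h5
      linarith
    have hz₁ : (0:ℝ) < z₁ := h₁
    have hz₂ : (0:ℝ) < z₂ := h₂
    nlinarith
  have key : ∫ u in Ioo (0:ℝ) V, g u = ∫ z in Ioi (0:ℝ), |f' z| • g (f z) := by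
    rw [← himage]
    exact integral_image_eq_integral_abs_deriv_smul measurableSet_Ioi hderiv hinj g
  -- pointwise identity
  have hpt : ∀ z ∈ Ioi (0:ℝ), |f' z| • g (f z) =
      V * (1 / fTW Φ (2*M + V) (-V) z - 1 / fTW Φ (2*M + V) V z) := by
    intro z hz
    have hz0 : (0:ℝ) < z := hz
    set s := Real.sqrt (1 + z^2) with hs
    have hs0 : (0:ℝ) < s := aux_sqrt_pos z
    have hs1 : 1 ≤ s := aux_sqrt_one_le z
    have hsq : s ^ 2 = 1 + z^2 := Real.sq_sqrt (by positivity)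
    have hfz : f z = V / s := rfl
    have hsqrtVu : Real.sqrt (V^2 - (V/s)^2) = V * z / s := by
      have h1 : V^2 - (V/s)^2 = (V * z / s)^2 := by
        field_simp
        nlinarith [hsq]
      rw [h1, Real.sqrt_sq (by positivity)]
    have hfd : |f' z| = V * z / s ^ 3 := by
      rw [hf']
      simp only [neg_div, abs_neg, abs_div]
      rw [abs_of_pos (by positivity : (0:ℝ) < V * z), abs_of_pos (by positivity : (0:ℝ) < s^3)]
    -- positivity of the denominators
    have ha : (0:ℝ) < V/s - Φ (V/s) + (2*M + V) := by
      have := aux_factor_lb Φ M V hΦM V z hVabs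
      rw [← hs] at this; linarith
    have hb : (0:ℝ) < -(V/s) - Φ (-(V/s)) + (2*M + V) := by
      have := aux_factor_lb Φ M V hΦM (-V) z hVnabs
      rw [← hs, neg_div] at this; linarith
    have hfTW1 : fTW Φ (2*M + V) V z = s^3 * (V/s - Φ (V/s) + (2*M + V)) := by
      unfold fTW; rw [← hs, aux_rpow_eq, hs]
    have hfTW2 : fTW Φ (2*M + V) (-V) z = s^3 * (-(V/s) - Φ (-(V/s)) + (2*M + V)) := by
      unfold fTW; rw [← hs, aux_rpow_eq, hs, neg_div]
    clear_value s f f' g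
    rw [smul_eq_mul, hfd, hfz, hfTW1, hfTW2]
    simp only [hg]
    rw [hsqrtVu]
    have e1 : 2 * (V/s) + Φ (-(V/s)) - Φ (V/s) =
        (V/s - Φ (V/s) + (2*M + V)) - (-(V/s) - Φ (-(V/s)) + (2*M + V)) := by ring
    rw [e1]
    exact aux_alg V z s _ _ hV.ne' hz0.ne' hs0.ne' ha.ne' hb.ne' 
  have hIoi : ∫ z in Ioi (0:ℝ), |f' z| • g (f z) =
      V * ∫ z in Ioi (0:ℝ), (1 / fTW Φ (2*M + V) (-V) z - 1 / fTW Φ (2*M + V) V z) := by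
    rw [setIntegral_congr_fun measurableSet_Ioi hpt, integral_const_mul]
  have hIoc : ∫ z in (0:ℝ)..V, g z = ∫ u in Ioo (0:ℝ) V, g u := by
    rw [intervalIntegral.integral_of_le hV.le, MeasureTheory.integral_Ioc_eq_integral_Ioo]
  rw [hIoc, key, hIoi]
  field_simp
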